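/- arXiv:1707.08075 — 2 statements merged into one kernel-verified Lean document; each statement's English description precedes it below -/
import Mathlib

section
/- Let $K$ be a field, $G = \mathrm{SL}_2(K)$ and $B$ the subgroup of upper-triangular matrices. Then $B$ is a maximal subgroup of $G$: there is no subgroup $H$ with $B \subsetneq H \subsetneq G$. -/
open Matrix Matrix.SpecialLinearGroup

/-- The Borel subgroup of upper-triangular matrices in `SL₂(K)`. -/
def upperTriangular (K : Type*) [Field K] :
    Subgroup (Matrix.SpecialLinearGroup (Fin 2) K) where
  carrier := {g | (g : Matrix (Fin 2) (Fin 2) K) 1 0 = 0}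
  one_mem' := by simp
  mul_mem' := by
    intro a b ha hb
    show ((a : Matrix (Fin 2) (Fin 2) K) * b) 1 0 = 0
    rw [Matrix.mul_apply, Fin.sum_univ_two]
    simp only [Set.mem_setOf_eq] at ha hb
    rw [ha, hb]; ring
  inv_mem' := by
    intro a ha
    show ((a⁻¹ : Matrix.SpecialLinearGroup (Fin 2) K) :
        Matrix (Fin 2) (Fin 2) K) 1 0 = 0
    rw [Matrix.SpecialLinearGroup.coe_inv, Matrix.adjugate_fin_two]
    simpa using ha

/-- The action of `SL₂(K)` on the projective line `ℙ¹(K)`. -/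
noncomputable def projAct {K : Type*} [Field K]
    (g : Matrix.SpecialLinearGroup (Fin 2) K) :
    Projectivization K (Fin 2 → K) → Projectivization K (Fin 2 → K) :=
  Projectivization.map (Matrix.SpecialLinearGroup.toLin' g).toLinearMap
    (Matrix.SpecialLinearGroup.toLin' g).injective

/-- The point `∞ = [1 : 0]` of `ℙ¹(K)`. -/
noncomputable def inftyPt (K : Type*) [Field K] : Projectivization K (Fin 2 → K) :=
  Projectivization.mk K ![1, 0] (by
    intro h
    simpa using congrFun h 0)


def wElt (K : Type*) [Field K] : Matrix.SpecialLinearGroup (Fin 2) K :=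
  ⟨!![0, -1; 1, 0], by simp [Matrix.det_fin_two_of]⟩

lemma bruhat {K : Type*} [Field K] (g : Matrix.SpecialLinearGroup (Fin 2) K)
    (hc : (g : Matrix (Fin 2) (Fin 2) K) 1 0 ≠ 0) :
    ∃ b1 b2, b1 ∈ upperTriangular K ∧ b2 ∈ upperTriangular K ∧
      g = b1 * wElt K * b2 := by
  set a := (g : Matrix (Fin 2) (Fin 2) K) 0 0
  set b := (g : Matrix (Fin 2) (Fin 2) K) 0 1
  set c := (g : Matrix (Fin 2) (Fin 2) K) 1 0
  set d := (g : Matrix (Fin 2) (Fin 2) K) 1 1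
  have hdet : a * d - b * c = 1 := by
    have := g.prop
    rwa [Matrix.det_fin_two] at this
  refine ⟨⟨!![1, a / c; 0, 1], by simp [Matrix.det_fin_two_of]⟩,
    ⟨!![c, d; 0, c⁻¹], by simp [Matrix.det_fin_two_of]; field_simp⟩, ?_, ?_, ?_⟩
  · show (!![1, a / c; 0, 1] : Matrix (Fin 2) (Fin 2) K) 1 0 = 0; simp
  · show (!![c, d; 0, c⁻¹] : Matrix (Fin 2) (Fin 2) K) 1 0 = 0; simp
  · ext i j
    fin_cases i <;> fin_cases j <;>
      erw [Matrix.SpecialLinearGroup.coe_mul, Matrix.SpecialLinearGroup.coe_mul] <;>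
      simp [wElt, Matrix.mul_apply, Fin.sum_univ_two] <;> (try field_simp) <;>
      first
        | linear_combination hdet
        | linear_combination -hdet
        | linear_combination 2*hdet
        | linear_combination -2*hdet
        | linear_combination c*hdet
        | linear_combination -c*hdet
        | ring

/-- `B` is a maximal subgroup of `SL₂(K)`: there is no subgroup strictly between
`B` and `G`, and `B ≠ G`. -/
theorem borel_is_maximal (K : Type*) [Field K] :
    upperTriangular K ≠ ⊤ ∧
      ∀ H : Subgroup (Matrix.SpecialLinearGroup (Fin 2) K),
        upperTriangular K < H → H = ⊤ := by
  have hw : wElt K ∉ upperTriangular K := by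
    show ¬ ((wElt K : Matrix (Fin 2) (Fin 2) K) 1 0 = 0)
    simp [wElt]
  constructor
  · intro h
    exact hw (h ▸ Subgroup.mem_top _)
  · intro H hH
    obtain ⟨h, hhH, hhB⟩ := SetLike.exists_of_lt hH
    have hc : (h : Matrix (Fin 2) (Fin 2) K) 1 0 ≠ 0 := hhB
    obtain ⟨b1, b2, hb1, hb2, heq⟩ := bruhat h hc
    have hBH : upperTriangular K ≤ H := hH.le
    have hwH : wElt K ∈ H := by
      have : wElt K = b1⁻¹ * h * b2⁻¹ := by
        rw [heq]; group
    -- show membership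
      rw [this]
      exact mul_mem (mul_mem (inv_mem (hBH hb1)) hhH) (inv_mem (hBH hb2))
    rw [eq_top_iff]
    intro g _
    by_cases hg : (g : Matrix (Fin 2) (Fin 2) K) 1 0 = 0
    · exact hBH hg
    · obtain ⟨c1, c2, hc1, hc2, hgeq⟩ := bruhat g hg
      rw [hgeq]
      exact mul_mem (mul_mem (hBH hc1) hwH) (hBH hc2)
end

section
/- Let $q, w \in \mathbb{C}$ with $|q| < |w| < |q|^{-1}$, $w \neq 1$, and $q \neq 0$ implies convergence of the following series. Then $\sum_{n \in \mathbb{Z}} \frac{q^n w}{(1 - q^n w)^2} = \frac{w}{(1-w)^2} + \sum_{n=1}^{\infty} \sum_{m=1}^{\infty} m\, q^{nm} (w^m + w^{-m})$, where the double series converges absolutely. -/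
private lemma tate_aux_hasSum {x : ℂ} (hx : ‖x‖ < 1) :
    HasSum (fun m : ℕ => ((m : ℂ) + 1) * x ^ (m + 1)) (x / (1 - x) ^ 2) := by
  have h := hasSum_coe_mul_geometric_of_norm_lt_one (𝕜 := ℂ) hx
  have h2 := (hasSum_nat_add_iff' (f := fun m : ℕ => (m : ℂ) * x ^ m) 1).mpr h
  simp only [Finset.sum_range_one, Nat.cast_zero, zero_mul, sub_zero] at h2
  convert h2 using 2 with m
  · rfl
  · push_cast
    ring

private lemma tate_aux_summable {r : ℝ} (hr : |r| < 1) :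
    Summable (fun m : ℕ => ((m : ℝ) + 1) * r ^ (m + 1)) := by
  have h := summable_pow_mul_geometric_of_norm_lt_one (R := ℝ) 1 (by rwa [Real.norm_eq_abs])
  have h2 := (summable_nat_add_iff (f := fun n : ℕ => (n : ℝ) ^ 1 * r ^ n) 1).mpr h
  convert h2 using 2 with m
  · rfl
  · push_cast
    ring

set_option maxHeartbeats 1600000 in
/-- Rearrangement of the Tate-curve coordinate series: for `|q| < |w| < |q|⁻¹`, `w ≠ 1`,
`∑_{n ∈ ℤ} qⁿw/(1-qⁿw)² = w/(1-w)² + ∑_{n,m ≥ 1} m qⁿᵐ (wᵐ + w⁻ᵐ)`, the double series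
converging absolutely. -/
theorem tate_x_series_rearrangement (q w : ℂ) (hq0 : q ≠ 0) (hw1 : w ≠ 1)
    (h1 : ‖q‖ < ‖w‖)
    (h2 : ‖w‖ < (‖q‖)⁻¹) :
    (∑' n : ℤ, q ^ n * w / (1 - q ^ n * w) ^ 2) =
      w / (1 - w) ^ 2 +
        ∑' p : ℕ × ℕ, ((p.2 + 1 : ℂ) * q ^ ((p.1 + 1) * (p.2 + 1)) *
          (w ^ (p.2 + 1) + w ^ (-(p.2 + 1 : ℤ)))) ∧
    Summable (fun p : ℕ × ℕ => ‖(p.2 + 1 : ℂ) * q ^ ((p.1 + 1) * (p.2 + 1)) *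
          (w ^ (p.2 + 1) + w ^ (-(p.2 + 1 : ℤ)))‖) := by
  have hq0' : (0 : ℝ) < ‖q‖ := norm_pos_iff.mpr hq0
  have hw0' : (0 : ℝ) < ‖w‖ := lt_of_le_of_lt (norm_nonneg q) h1
  have hw0 : w ≠ 0 := norm_pos_iff.mp hw0'
  have hq1 : ‖q‖ < 1 := by
    have : ‖q‖ < ‖q‖⁻¹ := h1.trans h2
    nlinarith [mul_lt_mul_of_pos_left this hq0', mul_inv_cancel₀ (ne_of_gt hq0')]
  have hr : ‖q‖ * ‖w‖ < 1 := by
    have := mul_lt_mul_of_pos_left h2 hq0'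
    rwa [mul_inv_cancel₀ (ne_of_gt hq0')] at this
  have hs : ‖q‖ / ‖w‖ < 1 := (div_lt_one hw0').mpr h1
  have hnc : ∀ m : ℕ, ‖((m : ℂ) + 1)‖ = (m : ℝ) + 1 := by
    intro m
    rw [show ((m : ℂ) + 1) = ((m + 1 : ℕ) : ℂ) by push_cast; ring, Complex.norm_natCast]
    push_cast; ring
  set a : ℕ × ℕ → ℂ := fun p => ((p.2 : ℂ) + 1) * q ^ ((p.1 + 1) * (p.2 + 1)) * w ^ (p.2 + 1)
    with ha_def
  set b : ℕ × ℕ → ℂ := fun p =>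
      ((p.2 : ℂ) + 1) * q ^ ((p.1 + 1) * (p.2 + 1)) * w ^ (-(p.2 + 1 : ℤ)) with hb_def
  -- norm computations
  have hna : ∀ p : ℕ × ℕ, ‖a p‖ = ((p.2 : ℝ) + 1) * (‖q‖ ^ (p.1 + 1) * ‖w‖) ^ (p.2 + 1) := by
    intro p
    simp only [ha_def, norm_mul, norm_pow, mul_pow, ← pow_mul]
    rw [hnc p.2]
    ring
  have hnb : ∀ p : ℕ × ℕ, ‖b p‖ = ((p.2 : ℝ) + 1) * (‖q‖ ^ (p.1 + 1) / ‖w‖) ^ (p.2 + 1) := by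
    intro p
    simp only [hb_def, norm_mul, norm_pow, norm_zpow, div_pow, ← pow_mul]
    rw [hnc p.2]
    rw [show (-(p.2 + 1 : ℤ)) = -((p.2 + 1 : ℕ) : ℤ) by push_cast; ring]
    rw [zpow_neg, zpow_natCast, div_eq_mul_inv]
    ring
  -- the dominating summable series
  have hbound : ∀ (c : ℝ), 0 ≤ c → c < 1 →
      Summable (fun p : ℕ × ℕ => ‖q‖ ^ p.1 * (((p.2 : ℝ) + 1) * c ^ (p.2 + 1))) := by
    intro c hc0 hc1
    have hf : Summable (fun n : ℕ => ‖q‖ ^ n) := summable_geometric_of_lt_one hq0'.le hq1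
    have hg : Summable (fun m : ℕ => ((m : ℝ) + 1) * c ^ (m + 1)) :=
      tate_aux_summable (by rwa [abs_of_nonneg hc0])
    have hf' : ∀ n : ℕ, 0 ≤ ‖q‖ ^ n := fun n => pow_nonneg hq0'.le n
    have hg' : ∀ m : ℕ, 0 ≤ ((m : ℝ) + 1) * c ^ (m + 1) := fun m =>
      mul_nonneg (by positivity) (pow_nonneg hc0 _)
    exact hf.mul_of_nonneg hg hf' hg' 
  have hkey : ∀ (n m : ℕ) (c : ℝ), 0 ≤ c →
      (‖q‖ ^ n * c) ^ (m + 1) ≤ ‖q‖ ^ n * c ^ (m + 1) := by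
    intro n m c hc0
    rw [mul_pow]
    apply mul_le_mul_of_nonneg_right _ (by positivity)
    calc (‖q‖ ^ n) ^ (m + 1) ≤ (‖q‖ ^ n) ^ 1 :=
          pow_le_pow_of_le_one (by positivity) (pow_le_one₀ hq0'.le hq1.le) (by omega)
      _ = ‖q‖ ^ n := pow_one _
  have hsa : Summable (fun p : ℕ × ℕ => ‖a p‖) := by
    apply Summable.of_nonneg_of_le (fun p => norm_nonneg _) _
      (hbound (‖q‖ * ‖w‖) (by positivity) hr)
    intro p
    rw [hna p]
    have : ‖q‖ ^ (p.1 + 1) * ‖w‖ = ‖q‖ ^ p.1 * (‖q‖ * ‖w‖) := by ring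
    rw [this]
    calc ((p.2 : ℝ) + 1) * (‖q‖ ^ p.1 * (‖q‖ * ‖w‖)) ^ (p.2 + 1)
        ≤ ((p.2 : ℝ) + 1) * (‖q‖ ^ p.1 * (‖q‖ * ‖w‖) ^ (p.2 + 1)) := by
          apply mul_le_mul_of_nonneg_left (hkey _ _ _ (by positivity)) (by positivity)
      _ = ‖q‖ ^ p.1 * (((p.2 : ℝ) + 1) * (‖q‖ * ‖w‖) ^ (p.2 + 1)) := by ring
  have hsb : Summable (fun p : ℕ × ℕ => ‖b p‖) := by
    apply Summable.of_nonneg_of_le (fun p => norm_nonneg _) _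
      (hbound (‖q‖ / ‖w‖) (by positivity) hs)
    intro p
    rw [hnb p]
    have : ‖q‖ ^ (p.1 + 1) / ‖w‖ = ‖q‖ ^ p.1 * (‖q‖ / ‖w‖) := by ring
    rw [this]
    calc ((p.2 : ℝ) + 1) * (‖q‖ ^ p.1 * (‖q‖ / ‖w‖)) ^ (p.2 + 1)
        ≤ ((p.2 : ℝ) + 1) * (‖q‖ ^ p.1 * (‖q‖ / ‖w‖) ^ (p.2 + 1)) := by
          apply mul_le_mul_of_nonneg_left (hkey _ _ _ (by positivity)) (by positivity)
      _ = ‖q‖ ^ p.1 * (((p.2 : ℝ) + 1) * (‖q‖ / ‖w‖) ^ (p.2 + 1)) := by ring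
  -- fiberwise sums, positive side
  set G : ℕ → ℂ := fun n => q ^ (n : ℤ) * w / (1 - q ^ (n : ℤ) * w) ^ 2 with hG_def
  have hxlt : ∀ n : ℕ, ‖q ^ (n + 1) * w‖ < 1 := by
    intro n
    rw [norm_mul, norm_pow]
    calc ‖q‖ ^ (n + 1) * ‖w‖ ≤ ‖q‖ * ‖w‖ := by
          apply mul_le_mul_of_nonneg_right _ (norm_nonneg w)
          calc ‖q‖ ^ (n + 1) ≤ ‖q‖ ^ 1 :=
              pow_le_pow_of_le_one hq0'.le hq1.le (by omega)
            _ = ‖q‖ := pow_one _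
      _ < 1 := hr
  have hfibA : ∀ n : ℕ, HasSum (fun m : ℕ => a (n, m)) (G (n + 1)) := by
    intro n
    have hh := tate_aux_hasSum (hxlt n)
    have he : ∀ m : ℕ, ((m : ℂ) + 1) * (q ^ (n + 1) * w) ^ (m + 1) = a (n, m) := by
      intro m
      simp only [ha_def, mul_pow, ← pow_mul]
      ring
    rw [funext he] at hh
    convert hh using 2 <;>
      simp only [zpow_natCast]
  have hA : HasSum a (∑' p, a p) := (hsa.of_norm).hasSum
  have hposSum : HasSum (fun n : ℕ => G (n + 1)) (∑' p, a p) :=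
    hA.prod_fiberwise hfibA
  have hG0 : G 0 = w / (1 - w) ^ 2 := by
    simp [hG_def]
  have hGpos : HasSum G ((∑' p, a p) + w / (1 - w) ^ 2) := by
    have := (hasSum_nat_add_iff (f := G) 1).mp hposSum
    rwa [Finset.sum_range_one, hG0] at this
  -- negative side
  have hylt : ∀ n : ℕ, ‖q ^ (n + 1) * w⁻¹‖ < 1 := by
    intro n
    rw [norm_mul, norm_inv, norm_pow]
    rw [mul_inv_lt_iff₀ hw0', one_mul]
    calc ‖q‖ ^ (n + 1) ≤ ‖q‖ ^ 1 := pow_le_pow_of_le_one hq0'.le hq1.le (by omega)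
      _ = ‖q‖ := pow_one _
      _ < ‖w‖ := h1
  have hfibB : ∀ n : ℕ, HasSum (fun m : ℕ => b (n, m))
      (q ^ (-(n + 1 : ℕ) : ℤ) * w / (1 - q ^ (-(n + 1 : ℕ) : ℤ) * w) ^ 2) := by
    intro n
    have hh := tate_aux_hasSum (hylt n)
    have he : ∀ m : ℕ, ((m : ℂ) + 1) * (q ^ (n + 1) * w⁻¹) ^ (m + 1) = b (n, m) := by
      intro m
      simp only [hb_def, mul_pow, ← pow_mul]
      rw [show (-(m + 1 : ℤ)) = -((m + 1 : ℕ) : ℤ) by push_cast; ring]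
      rw [zpow_neg, zpow_natCast, inv_pow]
      ring
    rw [funext he] at hh
    have hQ : q ^ (n + 1) ≠ 0 := pow_ne_zero _ hq0
    have hd1 : (1 : ℂ) - q ^ (n + 1) * w⁻¹ ≠ 0 := by
      intro hcon
      have : q ^ (n + 1) * w⁻¹ = 1 := by linear_combination -hcon
      have := congrArg norm this
      rw [norm_one] at this
      exact absurd this (ne_of_lt (hylt n))
    have hd2 : (1 : ℂ) - q ^ (-(n + 1 : ℕ) : ℤ) * w ≠ 0 := by
      intro hcon
      have h3 : q ^ (-(n + 1 : ℕ) : ℤ) * w = 1 := by linear_combination -hcon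
      have h4 : ‖q ^ (-(n + 1 : ℕ) : ℤ) * w‖ = 1 := by rw [h3, norm_one]
      rw [norm_mul, norm_zpow, zpow_neg, zpow_natCast] at h4
      have h5 : ‖q‖ ^ (n + 1) < ‖w‖ := by
        calc ‖q‖ ^ (n + 1) ≤ ‖q‖ ^ 1 := pow_le_pow_of_le_one hq0'.le hq1.le (by omega)
          _ = ‖q‖ := pow_one _
          _ < ‖w‖ := h1
      have h6 : (0 : ℝ) < ‖q‖ ^ (n + 1) := by positivity
      rw [inv_mul_eq_one₀ (ne_of_gt h6)] at h4
      exact absurd h4 (ne_of_lt h5)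
    convert hh using 1
    rw [zpow_neg, zpow_natCast] at hd2 ⊢
    rw [div_eq_div_iff (pow_ne_zero 2 hd2) (pow_ne_zero 2 hd1)]
    field_simp
    ring
  have hB : HasSum b (∑' p, b p) := (hsb.of_norm).hasSum
  have hnegSum : HasSum (fun n : ℕ => q ^ (-(n + 1 : ℕ) : ℤ) * w /
      (1 - q ^ (-(n + 1 : ℕ) : ℤ) * w) ^ 2) (∑' p, b p) :=
    hB.prod_fiberwise hfibB
  -- combine over ℤ
  have htotal : HasSum (fun n : ℤ => q ^ n * w / (1 - q ^ n * w) ^ 2)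
      (((∑' p, a p) + w / (1 - w) ^ 2) + ∑' p, b p) := by
    apply HasSum.of_nat_of_neg_add_one hGpos
    have hc : ∀ n : ℕ, (-(n + 1 : ℕ) : ℤ) = -((n : ℤ) + 1) := by intro n; push_cast; ring
    simp_rw [hc] at hnegSum
    exact hnegSum
  constructor
  · rw [htotal.tsum_eq]
    have hab : (fun p : ℕ × ℕ => ((p.2 : ℂ) + 1) * q ^ ((p.1 + 1) * (p.2 + 1)) *
        (w ^ (p.2 + 1) + w ^ (-(p.2 + 1 : ℤ)))) = fun p => a p + b p := by
      funext p
      simp only [ha_def, hb_def]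
      ring
    rw [hab, Summable.tsum_add hsa.of_norm hsb.of_norm]
    ring
  · apply Summable.of_nonneg_of_le (fun p => norm_nonneg _) _ (hsa.add hsb)
    intro p
    have : ((p.2 : ℂ) + 1) * q ^ ((p.1 + 1) * (p.2 + 1)) *
        (w ^ (p.2 + 1) + w ^ (-(p.2 + 1 : ℤ))) = a p + b p := by
      simp only [ha_def, hb_def]; ring
    rw [this]
    exact norm_add_le _ _
end
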